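/- Let n be a positive integer. Define g : ℝⁿ → ℝ by g(x) = ∑ i, |x i| / (2 + 2|x i|). Then for every fixed u ∈ ℝⁿ, the function h(x) = g(x) + (1/2)‖x - u‖² is convex on ℝⁿ. -/

import Mathlib

open Real

private lemma convexOn_sum_univ {E : Type*} [AddCommMonoid E] [Module ℝ E]
    {ι : Type*} (t : Finset ι) (f : ι → E → ℝ)
    (h : ∀ i ∈ t, ConvexOn ℝ Set.univ (f i)) :
    ConvexOn ℝ Set.univ (fun x => ∑ i ∈ t, f i x) := by
  classical
  induction t using Finset.cons_induction with
  | empty => simpa using convexOn_const 0 convex_univ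
  | cons i s hi ih =>
    simp only [Finset.sum_cons]
    exact (h i (Finset.mem_cons_self i s)).add
      (ih fun j hj => h j (Finset.mem_cons_of_mem hj))

private lemma convexOn_H :
    ConvexOn ℝ (Set.Ici (0:ℝ)) (fun t => t ^ 2 / 2 + (1 / 2 - (2 + 2 * t)⁻¹)) := by
  have hint : interior (Set.Ici (0:ℝ)) = Set.Ioi 0 := interior_Ici
  refine convexOn_of_hasDerivWithinAt2_nonneg (convex_Ici 0)
    (f' := fun t => t + 2 * ((2 + 2 * t)⁻¹) ^ 2)
    (f'' := fun t => 1 - 8 * ((2 + 2 * t)⁻¹) ^ 3) ?_ ?_ ?_ ?_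
  · have : ContinuousOn (fun t : ℝ => (2 + 2 * t)⁻¹) (Set.Ici 0) := by
      apply ContinuousOn.inv₀ (by fun_prop)
      intro x hx
      simp only [Set.mem_Ici] at hx
      nlinarith
    fun_prop
  · rw [hint]
    intro x hx
    simp only [Set.mem_Ioi] at hx
    have hne : (2 + 2 * x) ≠ 0 := by nlinarith
    have h1 : HasDerivAt (fun t : ℝ => t ^ 2 / 2 + (1 / 2 - (2 + 2 * t)⁻¹))
        (x + 2 * ((2 + 2 * x)⁻¹) ^ 2) x := by
      have hd : HasDerivAt (fun t : ℝ => (2 + 2 * t)) 2 x := by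
        simpa using ((hasDerivAt_id x).const_mul 2).const_add 2
      have hinv := hd.inv hne
      have hsq : HasDerivAt (fun t : ℝ => t ^ 2 / 2) x x := by
        simpa using ((hasDerivAt_pow 2 x).div_const 2)
      have := hsq.add ((hasDerivAt_const x (1/2:ℝ)).sub hinv)
      convert this using 1
      · rfl
      · rfl
      · rfl
      · rw [div_eq_mul_inv, ← inv_pow]
        ring
    exact h1.hasDerivWithinAt
  · rw [hint]
    intro x hx
    simp only [Set.mem_Ioi] at hx
    have hne : (2 + 2 * x) ≠ 0 := by nlinarith
    have hd : HasDerivAt (fun t : ℝ => (2 + 2 * t)) 2 x := by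
      simpa using ((hasDerivAt_id x).const_mul 2).const_add 2
    have hinv := hd.inv hne
    have := (hasDerivAt_id x).add (((hinv.pow 2).const_mul 2))
    convert this.hasDerivWithinAt using 1
    · rfl
    · rfl
    · rfl
    · show _ = 1 + 2 * (((2:ℕ):ℝ) * (2 + 2 * x)⁻¹ ^ 1 * (-2 / (2 + 2 * x) ^ 2))
      push_cast
      rw [div_eq_mul_inv, ← inv_pow]
      ring
  · rw [hint]
    intro x hx
    simp only [Set.mem_Ioi] at hx
    have h2 : (2:ℝ) ≤ 2 + 2 * x := by linarith
    have hpos : (0:ℝ) < 2 + 2 * x := by linarith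
    have : ((2 + 2 * x)⁻¹) ^ 3 ≤ (8:ℝ)⁻¹ := by
      have : (2 + 2 * x)⁻¹ ≤ (2:ℝ)⁻¹ := by
        apply inv_anti₀ (by norm_num) h2
      calc ((2 + 2 * x)⁻¹) ^ 3 ≤ ((2:ℝ)⁻¹) ^ 3 := by
            apply pow_le_pow_left₀ (by positivity) this
        _ = (8:ℝ)⁻¹ := by norm_num
    nlinarith

private lemma convexOn_G :
    ConvexOn ℝ (Set.univ : Set ℝ)
      (fun t => t ^ 2 / 2 + (1 / 2 - (2 + 2 * |t|)⁻¹)) := by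
  have himg : abs '' (Set.univ : Set ℝ) = Set.Ici 0 := by
    ext y
    constructor
    · rintro ⟨x, -, rfl⟩; exact abs_nonneg x
    · intro hy; exact ⟨y, Set.mem_univ y, abs_of_nonneg hy⟩
  have habs : ConvexOn ℝ (Set.univ : Set ℝ) abs := convexOn_univ_norm (E := ℝ)
  have hH := convexOn_H
  have hmono : MonotoneOn (fun t : ℝ => t ^ 2 / 2 + (1 / 2 - (2 + 2 * t)⁻¹))
      (abs '' Set.univ) := by
    rw [himg]
    intro a ha b hb hab
    simp only [Set.mem_Ici] at ha hb
    have h1 : a ^ 2 / 2 ≤ b ^ 2 / 2 := by nlinarith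
    have h2 : (2 + 2 * b)⁻¹ ≤ (2 + 2 * a)⁻¹ := by
      apply inv_anti₀ (by linarith) (by linarith)
    dsimp only
    linarith
  have := (hH.subset (by rw [himg]) (by rw [himg]; exact convex_Ici 0)).comp habs hmono
  convert this using 2 with t
  simp [Function.comp, sq_abs]

theorem stmt_8 (n : ℕ) (hn : 0 < n)
    (g : EuclideanSpace ℝ (Fin n) → ℝ)
    (hg : ∀ x, g x = ∑ i, |x i| / (2 + 2 * |x i|))
    (u : EuclideanSpace ℝ (Fin n)) :
    ConvexOn ℝ Set.univ (fun x => g x + (1 / 2) * ‖x - u‖ ^ 2) := by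
  have hnorm : ∀ x : EuclideanSpace ℝ (Fin n), ‖x - u‖ ^ 2 = ∑ i, (x i - u i) ^ 2 := by
    intro x
    rw [EuclideanSpace.norm_eq]
    rw [Real.sq_sqrt (by positivity)]
    congr 1
    ext i
    simp [Real.norm_eq_abs, sq_abs]
  have key : (fun x : EuclideanSpace ℝ (Fin n) => g x + (1 / 2) * ‖x - u‖ ^ 2)
      = fun x => ∑ i, ((x i) ^ 2 / 2 + (1 / 2 - (2 + 2 * |x i|)⁻¹)
          + (-(u i) * (x i) + (u i) ^ 2 / 2)) := by
    funext x
    rw [hg, hnorm, Finset.mul_sum, ← Finset.sum_add_distrib]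
    congr 1
    ext i
    have h2 : (0:ℝ) < 2 + 2 * |x i| := by positivity
    have : |x i| / (2 + 2 * |x i|) = 1 / 2 - (2 + 2 * |x i|)⁻¹ := by
      field_simp
      ring
    rw [this]
    ring
  rw [key]
  apply convexOn_sum_univ
  intro i _
  have hlin : ConvexOn ℝ (Set.univ : Set (EuclideanSpace ℝ (Fin n)))
      (fun x => -(u i) * (x i) + (u i) ^ 2 / 2) := by
    refine ⟨convex_univ, ?_⟩
    intro x _ y _ a b _ _ hab
    have hx : (a • x + b • y) i = a * x i + b * y i := rfl
    simp only [hx, smul_eq_mul]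
    nlinarith [hab]
  have hcomp : ConvexOn ℝ (Set.univ : Set (EuclideanSpace ℝ (Fin n)))
      (fun x => (x i) ^ 2 / 2 + (1 / 2 - (2 + 2 * |x i|)⁻¹)) := by
    have := convexOn_G.comp_linearMap (EuclideanSpace.projₗ i : EuclideanSpace ℝ (Fin n) →ₗ[ℝ] ℝ)
    exact this
  exact hcomp.add hlin
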